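/- Maximal nested sets on the diagram A_{n-1} are in bijection with complete bracketings of the non-associative monomial x_1 x_2 ... x_n; in particular every maximal nested set on A_{n-1} has exactly n-1 elements besides the empty diagram. -/

import Mathlib

/-- Orthogonality of subdiagrams. -/
def SimpleGraph.Orthogonal {V : Type*} (G : SimpleGraph V) (B1 B2 : Set V) : Prop :=
  Disjoint B1 B2 ∧ ∀ i ∈ B1, ∀ j ∈ B2, ¬ G.Adj i j

/-- Compatibility of subdiagrams: one contains the other, or they are orthogonal. -/
def SimpleGraph.Compatible {V : Type*} (G : SimpleGraph V) (B1 B2 : Set V) : Prop :=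
  B1 ⊆ B2 ∨ B2 ⊆ B1 ∨ G.Orthogonal B1 B2

/-- The path graph on `ℕ`; the diagram `A_{n-1}` is its restriction to `{1, ..., n-1}`. -/
def pathGraph : SimpleGraph ℕ := SimpleGraph.fromRel (fun a b => b = a + 1)

/-- A nested set on the (connected) diagram `A_{n-1}` with vertex set `Icc 1 (n-1)`:
a collection of pairwise compatible connected subdiagrams, containing the empty
subdiagram and the full diagram (its unique connected component). -/
def IsNestedSetA (n : ℕ) (H : Set (Set ℕ)) : Prop :=
  (∀ B ∈ H, B ⊆ Set.Icc 1 (n - 1)) ∧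
  (∀ B ∈ H, B.Nonempty → (pathGraph.induce B).Connected) ∧
  (∀ B1 ∈ H, ∀ B2 ∈ H, pathGraph.Compatible B1 B2) ∧
  (∅ : Set ℕ) ∈ H ∧ Set.Icc 1 (n - 1) ∈ H

/-- A maximal nested set on `A_{n-1}`. -/
def IsMaxNestedSetA (n : ℕ) (H : Set (Set ℕ)) : Prop :=
  IsNestedSetA n H ∧ ∀ H', IsNestedSetA n H' → H ⊆ H' → H' = H

lemma pathGraph_adj {p q : ℕ} : pathGraph.Adj p q ↔ (q = p + 1 ∨ p = q + 1) := by
  simp [pathGraph, SimpleGraph.fromRel_adj]; omega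

lemma walk_ivt {B : Set ℕ} {u v : B} (p : (pathGraph.induce B).Walk u v) :
    ∀ k, (u : ℕ) ≤ k → k ≤ (v : ℕ) → k ∈ B := by
  induction p with
  | nil => intro k h1 h2; have : (k : ℕ) = _ := le_antisymm h2 h1; exact this ▸ (by exact_mod_cast Subtype.coe_prop _)
  | @cons a w c h p ih =>
    intro k h1 h2
    have hadj : pathGraph.Adj a w := by simpa [SimpleGraph.comap_adj] using h
    rw [pathGraph_adj] at hadj
    rcases Nat.lt_or_ge k ((w : ℕ)) with hk | hk
    · -- k < w; combined with adj, k = a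
      have : (k : ℕ) = (a : ℕ) := by omega
      exact this ▸ a.coe_prop
    · exact ih k hk h2

lemma connected_subset_interval {B : Set ℕ} (hc : (pathGraph.induce B).Connected)
    {i j k : ℕ} (hi : i ∈ B) (hj : j ∈ B) (h1 : i ≤ k) (h2 : k ≤ j) : k ∈ B := by
  obtain ⟨p⟩ := hc.preconnected ⟨i, hi⟩ ⟨j, hj⟩
  exact walk_ivt p k h1 h2

lemma icc_connected {a b : ℕ} (h : a ≤ b) : (pathGraph.induce (Set.Icc a b)).Connected := by
  have ha : a ∈ Set.Icc a b := ⟨le_refl a, h⟩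
  have key : ∀ x (hx : x ∈ Set.Icc a b),
      (pathGraph.induce (Set.Icc a b)).Reachable ⟨a, ha⟩ ⟨x, hx⟩ := by
    intro x
    induction x with
    | zero => intro hx; have : a = 0 := Nat.le_zero.mp hx.1; subst this; rfl
    | succ y ihy =>
      intro hx
      rcases Nat.lt_or_ge a (y+1) with hlt | hge
      · have hy : y ∈ Set.Icc a b := ⟨by omega, by have := hx.2; omega⟩
        have hr := ihy hy
        refine hr.trans (SimpleGraph.Adj.reachable ?_)
        simp only [SimpleGraph.comap_adj, SimpleGraph.induce]
        show pathGraph.Adj y (y+1)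
        rw [pathGraph_adj]; left; rfl
      · have : a = y + 1 := by have := hx.1; omega
        subst this; rfl
  have : Nonempty (Set.Icc a b) := ⟨⟨a, ha⟩⟩
  refine SimpleGraph.Connected.mk ?_
  intro u v
  exact (key u.1 u.2).symm.trans (key v.1 v.2)

lemma orth_icc_iff {i j k l : ℕ} (h1 : i ≤ j) (h2 : k ≤ l) :
    pathGraph.Orthogonal (Set.Icc i j) (Set.Icc k l) ↔ (j + 1 < k ∨ l + 1 < i) := by
  constructor
  · rintro ⟨hd, hadj⟩
    by_contra hc
    push_neg at hc
    rcases Nat.lt_or_ge j k with hjk | hjk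
    · exact hadj j ⟨h1, le_refl _⟩ k ⟨le_refl _, h2⟩ (pathGraph_adj.mpr (by omega))
    · rcases Nat.lt_or_ge l i with hli | hli
      · exact hadj i ⟨le_refl _, h1⟩ l ⟨h2, le_refl _⟩ (pathGraph_adj.mpr (by omega))
      · exact (Set.disjoint_left.mp hd) (show max i k ∈ Set.Icc i j from ⟨by omega, by omega⟩) ⟨by omega, by omega⟩
  · intro h
    constructor
    · rw [Set.disjoint_left]
      rintro x ⟨hx1, hx2⟩ ⟨hx3, hx4⟩; omega
    · rintro p ⟨hp1, hp2⟩ q ⟨hq1, hq2⟩ hadj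
      rw [pathGraph_adj] at hadj; omega

lemma compat_icc_iff {i j k l : ℕ} (h1 : i ≤ j) (h2 : k ≤ l) :
    pathGraph.Compatible (Set.Icc i j) (Set.Icc k l) ↔
      (k ≤ i ∧ j ≤ l) ∨ (i ≤ k ∧ l ≤ j) ∨ j + 1 < k ∨ l + 1 < i := by
  unfold SimpleGraph.Compatible
  rw [Set.Icc_subset_Icc_iff h1, Set.Icc_subset_Icc_iff h2, orth_icc_iff h1 h2]


/-- The family of intervals determined by a bracketing tree, with leftmost leaf `a`. -/
def fam : BinaryTree Unit → ℕ → Set (Set ℕ)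
  | BinaryTree.nil, _ => ∅
  | BinaryTree.node _ l r, a =>
      insert (Set.Icc a (a + l.numNodes + r.numNodes))
        (fam l a ∪ fam r (a + l.numNodes + 1))

lemma fam_range : ∀ (t : BinaryTree Unit) (a : ℕ), ∀ B ∈ fam t a,
    ∃ i j, a ≤ i ∧ i ≤ j ∧ j + 1 ≤ a + t.numNodes ∧ B = Set.Icc i j := by
  intro t
  induction t with
  | nil => intro a B hB; exact absurd hB (Set.notMem_empty _)
  | node x l r ihl ihr =>
    intro a B hB
    rcases hB with rfl | hB | hB
    · exact ⟨a, a + l.numNodes + r.numNodes, le_refl _, by omega, by simp [BinaryTree.numNodes]; omega, rfl⟩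
    · obtain ⟨i, j, h1, h2, h3, h4⟩ := ihl a B hB
      exact ⟨i, j, h1, h2, by simp [BinaryTree.numNodes]; omega, h4⟩
    · obtain ⟨i, j, h1, h2, h3, h4⟩ := ihr (a + l.numNodes + 1) B hB
      exact ⟨i, j, by omega, h2, by simp [BinaryTree.numNodes]; omega, h4⟩

lemma fam_top {x : Unit} {l r : BinaryTree Unit} {a : ℕ} :
    Set.Icc a (a + l.numNodes + r.numNodes) ∈ fam (BinaryTree.node x l r) a :=
  Set.mem_insert _ _

lemma fam_compat : ∀ (t : BinaryTree Unit) (a : ℕ), ∀ B1 ∈ fam t a, ∀ B2 ∈ fam t a,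
    pathGraph.Compatible B1 B2 := by
  intro t
  induction t with
  | nil => intro a B1 h1; exact absurd h1 (Set.notMem_empty _)
  | node x l r ihl ihr =>
    intro a B1 h1 B2 h2
    -- helper: anything in fam is a subset of top
    have hsub : ∀ B ∈ fam (BinaryTree.node x l r) a, B ⊆ Set.Icc a (a + l.numNodes + r.numNodes) := by
      intro B hB
      obtain ⟨i, j, g1, g2, g3, rfl⟩ := fam_range _ a B hB
      exact Set.Icc_subset_Icc g1 (by simp [BinaryTree.numNodes] at g3; omega)
    have horth : ∀ C1 ∈ fam l a, ∀ C2 ∈ fam r (a + l.numNodes + 1),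
        pathGraph.Orthogonal C1 C2 := by
      intro C1 hC1 C2 hC2
      obtain ⟨i, j, g1, g2, g3, rfl⟩ := fam_range l a C1 hC1
      obtain ⟨k, m, f1, f2, f3, rfl⟩ := fam_range r _ C2 hC2
      exact (orth_icc_iff g2 f2).mpr (by omega)
    rcases h1 with rfl | h1 | h1 <;> rcases h2 with rfl | h2 | h2
    · left; exact le_refl _
    · right; left; exact hsub _ (Or.inr (Or.inl h2))
    · right; left; exact hsub _ (Or.inr (Or.inr h2))
    · left; exact hsub _ (Or.inr (Or.inl h1))
    · exact ihl a B1 h1 B2 h2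
    · right; right; exact horth _ h1 _ h2
    · left; exact hsub _ (Or.inr (Or.inr h1))
    · have := horth _ h2 _ h1
      right; right; exact ⟨this.1.symm, fun p hp q hq hadj => this.2 q hq p hp hadj.symm⟩
    · exact ihr _ B1 h1 B2 h2

lemma fam_max : ∀ (t : BinaryTree Unit) (a i j : ℕ), a ≤ i → i ≤ j → j + 1 ≤ a + t.numNodes →
    (∀ C ∈ fam t a, pathGraph.Compatible (Set.Icc i j) C) → Set.Icc i j ∈ fam t a := by
  intro t
  induction t with
  | nil => intro a i j h1 h2 h3; simp [BinaryTree.numNodes] at h3; omega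
  | node x l r ihl ihr =>
    intro a i j h1 h2 h3 hcomp
    set nl := l.numNodes with hnl
    set nr := r.numNodes with hnr
    have hb : j ≤ a + nl + nr := by simp [BinaryTree.numNodes] at h3; omega
    by_cases htop : Set.Icc i j = Set.Icc a (a + nl + nr)
    · rw [htop]; exact fam_top
    -- J is a proper subinterval; case on position of the gap g = a + nl
    rcases Nat.lt_or_ge j (a + nl) with hleft | h4
    · -- J ⊆ left range; nl ≥ 1 automatic
      refine Or.inr (Or.inl (ihl a i j h1 h2 (by omega) ?_))
      intro C hC; exact hcomp C (Or.inr (Or.inl hC))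
    rcases Nat.lt_or_ge (a + nl) i with hright | h5
    · refine Or.inr (Or.inr (ihr (a + nl + 1) i j (by omega) h2 (by simp [BinaryTree.numNodes] at h3; omega) ?_))
      intro C hC; exact hcomp C (Or.inr (Or.inr hC))
    -- a + nl ∈ [i printing, j]: derive i = a and j = a + nl + nr, contradiction with htop
    exfalso
    have hia : i = a := by
      rcases Nat.eq_zero_or_pos nl with h0 | h0
      · omega
      · -- left top L = Icc a (a+nl-1) ∈ fam l a
        obtain ⟨x', l', r', hl'⟩ : ∃ x' l' r', l = BinaryTree.node x' l' r' := by
          cases l with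
          | nil => simp [hnl, BinaryTree.numNodes] at h0
          | node y p q => exact ⟨y, p, q, rfl⟩
        have hLmem : Set.Icc a (a + nl - 1) ∈ fam l a := by
          rw [hl']
          have : a + nl - 1 = a + l'.numNodes + r'.numNodes := by
            rw [hnl, hl']; simp [BinaryTree.numNodes]; omega
          rw [this]; exact fam_top
        have hcl := hcomp _ (Or.inr (Or.inl hLmem))
        rw [compat_icc_iff h2 (by omega)] at hcl
        omega
    have hja : j = a + nl + nr := by
      rcases Nat.eq_zero_or_pos nr with h0 | h0
      · omega
      · obtain ⟨x', l', r', hr'⟩ : ∃ x' l' r', r = BinaryTree.node x' l' r' := by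
          cases r with
          | nil => simp [hnr, BinaryTree.numNodes] at h0
          | node y p q => exact ⟨y, p, q, rfl⟩
        have hRmem : Set.Icc (a + nl + 1) (a + nl + nr) ∈ fam r (a + nl + 1) := by
          rw [hr']
          have : a + nl + nr = (a + nl + 1) + l'.numNodes + r'.numNodes := by
            rw [hnr, hr']; simp [BinaryTree.numNodes]; omega
          rw [this]; exact fam_top
        have hcl := hcomp _ (Or.inr (Or.inr hRmem))
        rw [compat_icc_iff h2 (by omega)] at hcl
        omega
    exact htop (by rw [hia, hja])

lemma icc_eq_icc {a b c d : ℕ} (h1 : a ≤ b) (h2 : c ≤ d) (h : Set.Icc a b = Set.Icc c d) :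
    a = c ∧ b = d := by
  have ha : a ∈ Set.Icc c d := h ▸ Set.mem_Icc.mpr ⟨le_refl a, h1⟩
  have hb : b ∈ Set.Icc c d := h ▸ Set.mem_Icc.mpr ⟨h1, le_refl b⟩
  have hc : c ∈ Set.Icc a b := h.symm ▸ Set.mem_Icc.mpr ⟨le_refl c, h2⟩
  have hd : d ∈ Set.Icc a b := h.symm ▸ Set.mem_Icc.mpr ⟨h2, le_refl d⟩
  simp only [Set.mem_Icc] at ha hb hc hd
  omega

lemma fam_nonempty_mem : ∀ (t : BinaryTree Unit) (a : ℕ), ∀ B ∈ fam t a, B.Nonempty := by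
  intro t a B hB
  obtain ⟨i, j, h1, h2, h3, rfl⟩ := fam_range t a B hB
  exact Set.nonempty_Icc.mpr h2

lemma fam_finite : ∀ (t : BinaryTree Unit) (a : ℕ), (fam t a).Finite := by
  intro t
  induction t with
  | nil => intro a; simp [fam]
  | node x l r ihl ihr =>
    intro a
    exact (Set.Finite.union (ihl a) (ihr _)).insert _

lemma fam_ncard : ∀ (t : BinaryTree Unit) (a : ℕ), (fam t a).ncard = t.numNodes := by
  intro t
  induction t with
  | nil => intro a; simp [fam, BinaryTree.numNodes]
  | node x l r ihl ihr =>
    intro a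
    set nl := l.numNodes
    set nr := r.numNodes
    have htopnot : Set.Icc a (a + nl + nr) ∉ fam l a ∪ fam r (a + nl + 1) := by
      rintro (h | h)
      · obtain ⟨i, j, h1, h2, h3, h4⟩ := fam_range l a _ h
        have := icc_eq_icc h2 (by omega) h4.symm
        omega
      · obtain ⟨i, j, h1, h2, h3, h4⟩ := fam_range r _ _ h
        have := icc_eq_icc h2 (by omega) h4.symm
        omega
    have hdisj : Disjoint (fam l a) (fam r (a + nl + 1)) := by
      rw [Set.disjoint_left]
      intro B h1 h2
      obtain ⟨i, j, g1, g2, g3, rfl⟩ := fam_range l a _ h1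
      obtain ⟨k, m, f1, f2, f3, h4⟩ := fam_range r _ _ h2
      have := icc_eq_icc g2 f2 h4
      omega
    show (insert (Set.Icc a (a + nl + nr)) (fam l a ∪ fam r (a + nl + 1))).ncard = _
    rw [Set.ncard_insert_of_notMem htopnot ((fam_finite l a).union (fam_finite r _)),
      Set.ncard_union_eq hdisj (fam_finite l a) (fam_finite r _), ihl, ihr]
    simp [BinaryTree.numNodes]; rfl

lemma fam_top_not_mem {l r : BinaryTree Unit} {a : ℕ} :
    Set.Icc a (a + l.numNodes + r.numNodes) ∉ fam l a ∪ fam r (a + l.numNodes + 1) := by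
  rintro (h | h)
  · obtain ⟨i, j, h1, h2, h3, h4⟩ := fam_range l a _ h
    have := icc_eq_icc h2 (by omega) h4.symm
    omega
  · obtain ⟨i, j, h1, h2, h3, h4⟩ := fam_range r _ _ h
    have := icc_eq_icc h2 (by omega) h4.symm
    omega

lemma fam_cover : ∀ (t : BinaryTree Unit) (a x : ℕ),
    (∃ B ∈ fam t a, x ∈ B) ↔ (a ≤ x ∧ x + 1 ≤ a + t.numNodes) := by
  intro t a x
  cases t with
  | nil =>
    simp [fam, BinaryTree.numNodes]
  | node y l r =>
    constructor
    · rintro ⟨B, hB, hx⟩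
      obtain ⟨i, j, h1, h2, h3, rfl⟩ := fam_range _ a _ hB
      rw [Set.mem_Icc] at hx
      omega
    · intro h
      exact ⟨_, fam_top, Set.mem_Icc.mpr (by simp [BinaryTree.numNodes] at h; omega)⟩

lemma fam_inj : ∀ (t t' : BinaryTree Unit) (a : ℕ), fam t a = fam t' a → t = t' := by
  intro t
  induction t with
  | nil =>
    intro t' a h
    cases t' with
    | nil => rfl
    | node y l r =>
      exfalso
      have : Set.Icc a (a + l.numNodes + r.numNodes) ∈ fam (BinaryTree.nil : BinaryTree Unit) a := h ▸ fam_top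
      exact Set.notMem_empty _ this
  | node x l r ihl ihr =>
    intro t' a h
    cases t' with
    | nil =>
      exfalso
      have : Set.Icc a (a + l.numNodes + r.numNodes) ∈ fam (BinaryTree.nil : BinaryTree Unit) a := h ▸ fam_top
      exact Set.notMem_empty _ this
    | node x' l' r' =>
      obtain ⟨⟩ := x; obtain ⟨⟩ := x'
      set nl := l.numNodes with hnl
      set nr := r.numNodes with hnr
      set nl' := l'.numNodes with hnl'
      set nr' := r'.numNodes with hnr'
      -- tops are equal
      have hsum : nl + nr = nl' + nr' := by
        have h1 : Set.Icc a (a + nl + nr) ∈ fam (BinaryTree.node () l' r') a := h ▸ fam_top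
        obtain ⟨i, j, g1, g2, g3, g4⟩ := fam_range _ a _ h1
        have e1 := icc_eq_icc (by omega) g2 g4
        have h2 : Set.Icc a (a + nl' + nr') ∈ fam (BinaryTree.node () l r) a := h.symm ▸ fam_top
        obtain ⟨i', j', f1, f2, f3, f4⟩ := fam_range _ a _ h2
        have e2 := icc_eq_icc (by omega) f2 f4
        simp [BinaryTree.numNodes] at g3 f3
        omega
      -- proper parts are equal
      have hU : fam l a ∪ fam r (a + nl + 1) = fam l' a ∪ fam r' (a + nl' + 1) := by
        have e1 : fam (BinaryTree.node () l r) a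
            = insert (Set.Icc a (a + nl + nr)) (fam l a ∪ fam r (a + nl + 1)) := rfl
        have e2 : fam (BinaryTree.node () l' r') a
            = insert (Set.Icc a (a + nl' + nr')) (fam l' a ∪ fam r' (a + nl' + 1)) := rfl
        have etop : (a : ℕ) + nl + nr = a + nl' + nr' := by omega
        calc fam l a ∪ fam r (a + nl + 1)
            = insert (Set.Icc a (a + nl + nr)) (fam l a ∪ fam r (a + nl + 1))
              \ {Set.Icc a (a + nl + nr)} := by
              rw [Set.insert_diff_self_of_notMem fam_top_not_mem]
          _ = insert (Set.Icc a (a + nl' + nr')) (fam l' a ∪ fam r' (a + nl' + 1))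
              \ {Set.Icc a (a + nl' + nr')} := by rw [← e1, ← e2, h, etop]
          _ = fam l' a ∪ fam r' (a + nl' + 1) := by
              rw [Set.insert_diff_self_of_notMem fam_top_not_mem]
      -- the gaps agree
      have hgap : nl = nl' := by
        by_contra hne
        have c1 : ∀ x, (∃ B ∈ fam l a ∪ fam r (a + nl + 1), x ∈ B)
            ↔ (a ≤ x ∧ x ≤ a + nl + nr ∧ x ≠ a + nl) := by
          intro x
          constructor
          · rintro ⟨B, hB | hB, hx⟩
            · have := (fam_cover l a x).mp ⟨B, hB, hx⟩; omega
            · have := (fam_cover r (a + nl + 1) x).mp ⟨B, hB, hx⟩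
              simp [BinaryTree.numNodes] at this ⊢
              omega
          · intro hx
            rcases Nat.lt_or_ge x (a + nl) with h' | h'
            · obtain ⟨B, hB, hxB⟩ := (fam_cover l a x).mpr ⟨hx.1, by omega⟩
              exact ⟨B, Or.inl hB, hxB⟩
            · obtain ⟨B, hB, hxB⟩ := (fam_cover r (a + nl + 1) x).mpr ⟨by omega, by omega⟩
              exact ⟨B, Or.inr hB, hxB⟩
        have c2 : ∀ x, (∃ B ∈ fam l' a ∪ fam r' (a + nl' + 1), x ∈ B)
            ↔ (a ≤ x ∧ x ≤ a + nl' + nr' ∧ x ≠ a + nl') := by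
          intro x
          constructor
          · rintro ⟨B, hB | hB, hx⟩
            · have := (fam_cover l' a x).mp ⟨B, hB, hx⟩; omega
            · have := (fam_cover r' (a + nl' + 1) x).mp ⟨B, hB, hx⟩
              omega
          · intro hx
            rcases Nat.lt_or_ge x (a + nl') with h' | h'
            · obtain ⟨B, hB, hxB⟩ := (fam_cover l' a x).mpr ⟨hx.1, by omega⟩
              exact ⟨B, Or.inl hB, hxB⟩
            · obtain ⟨B, hB, hxB⟩ := (fam_cover r' (a + nl' + 1) x).mpr ⟨by omega, by omega⟩
              exact ⟨B, Or.inr hB, hxB⟩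
        rcases Nat.lt_or_ge nl nl' with hlt | hge
        · have : a ≤ a + nl ∧ a + nl ≤ a + nl' + nr' ∧ a + nl ≠ a + nl' := by omega
          obtain ⟨B, hB, hxB⟩ := (c2 _).mpr this
          have := (c1 _).mp ⟨B, hU ▸ hB, hxB⟩
          omega
        · have hgt : nl' < nl := by omega
          have : a ≤ a + nl' ∧ a + nl' ≤ a + nl + nr ∧ a + nl' ≠ a + nl := by omega
          obtain ⟨B, hB, hxB⟩ := (c1 _).mpr this
          have := (c2 _).mp ⟨B, hU ▸ hB, hxB⟩
          omega
      -- split the proper parts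
      have hL : fam l a = fam l' a := by
        apply Set.eq_of_subset_of_subset
        · intro B hB
          have : B ∈ fam l' a ∪ fam r' (a + nl' + 1) := hU ▸ Or.inl hB
          rcases this with h' | h'
          · exact h'
          · exfalso
            obtain ⟨i, j, g1, g2, g3, rfl⟩ := fam_range l a _ hB
            obtain ⟨i', j', f1, f2, f3, f4⟩ := fam_range r' _ _ h'
            have := icc_eq_icc g2 f2 f4
            omega
        · intro B hB
          have : B ∈ fam l a ∪ fam r (a + nl + 1) := hU.symm ▸ Or.inl hB
          rcases this with h' | h'
          · exact h'
          · exfalso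
            obtain ⟨i, j, g1, g2, g3, rfl⟩ := fam_range l' a _ hB
            obtain ⟨i', j', f1, f2, f3, f4⟩ := fam_range r _ _ h'
            have := icc_eq_icc g2 f2 f4
            omega
      have hR : fam r (a + nl + 1) = fam r' (a + nl + 1) := by
        apply Set.eq_of_subset_of_subset
        · intro B hB
          have : B ∈ fam l' a ∪ fam r' (a + nl' + 1) := hU ▸ Or.inr hB
          rcases this with h' | h'
          · exfalso
            obtain ⟨i, j, g1, g2, g3, rfl⟩ := fam_range r _ _ hB
            obtain ⟨i', j', f1, f2, f3, f4⟩ := fam_range l' _ _ h'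
            have := icc_eq_icc g2 f2 f4
            omega
          · rw [hgap]; exact h'
        · intro B hB
          rw [hgap] at hB
          have : B ∈ fam l a ∪ fam r (a + nl + 1) := hU.symm ▸ Or.inr hB
          rcases this with h' | h'
          · exfalso
            obtain ⟨i, j, g1, g2, g3, rfl⟩ := fam_range r' _ _ hB
            obtain ⟨i', j', f1, f2, f3, f4⟩ := fam_range l _ _ h'
            have := icc_eq_icc g2 f2 f4
            omega
          · exact h'
      rw [ihl _ _ hL, ihr _ _ hR]

/-- A maximal family of pairwise-compatible nonempty intervals inside `[a,b]`. -/
def MaxFam (a b : ℕ) (F : Set (Set ℕ)) : Prop :=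
  (∀ B ∈ F, ∃ i j, a ≤ i ∧ i ≤ j ∧ j ≤ b ∧ B = Set.Icc i j) ∧
  (∀ B1 ∈ F, ∀ B2 ∈ F, pathGraph.Compatible B1 B2) ∧
  Set.Icc a b ∈ F ∧
  (∀ i j, a ≤ i → i ≤ j → j ≤ b → (∀ C ∈ F, pathGraph.Compatible (Set.Icc i j) C) →
    Set.Icc i j ∈ F)

lemma maxfam_exists : ∀ k a F, MaxFam a (a + k) F →
    ∃ t : BinaryTree Unit, t.numNodes = k + 1 ∧ fam t a = F := by
  intro k
  induction k using Nat.strong_induction_on with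
  | _ k ih =>
  intro a F hF
  obtain ⟨hrange, hcompat, htop, hmax⟩ := hF
  rcases Nat.eq_zero_or_pos k with rfl | hk
  · refine ⟨BinaryTree.node () BinaryTree.nil BinaryTree.nil, by simp [BinaryTree.numNodes], ?_⟩
    apply Set.eq_of_subset_of_subset
    · intro B hB
      rcases hB with rfl | hB | hB
      · simpa using htop
      · exact absurd hB (Set.notMem_empty _)
      · exact absurd hB (Set.notMem_empty _)
    · intro B hB
      obtain ⟨i, j, h1, h2, h3, rfl⟩ := hrange B hB
      have hi : i = a := by omega
      have hj : j = a := by omega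
      subst hi; subst hj
      left
      simp
  -- k ≥ 1
  set P : Set ℕ := {j | a ≤ j ∧ j < a + k ∧ Set.Icc a j ∈ F} with hP
  by_cases hPne : P.Nonempty
  · -- Case 1: some proper element starts at a
    have hbdd : BddAbove P := ⟨a + k, fun j hj => le_of_lt hj.2.1⟩
    set e := sSup P with hedef
    have he : e ∈ P := Nat.sSup_mem hPne hbdd
    have hePmax : ∀ j ∈ P, j ≤ e := fun j hj => le_csSup hbdd hj
    obtain ⟨he1, he2, he3⟩ := he
    -- trichotomy
    have K1 : ∀ i j, a ≤ i → i ≤ j → j ≤ a + k → Set.Icc i j ∈ F →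
        (i = a ∧ j = a + k) ∨ j ≤ e ∨ e + 2 ≤ i := by
      intro i j h1 h2 h3 hB
      have hc := hcompat _ hB _ he3
      rw [compat_icc_iff h2 he1] at hc
      rcases hc with ⟨d1, d2⟩ | ⟨d1, d2⟩ | d | d
      · right; left; exact d2
      · have hia : i = a := le_antisymm d1 h1
        rcases Nat.lt_or_ge j (a + k) with hj | hj
        · have hjP : j ∈ P := ⟨by omega, hj, by rw [← hia]; exact hB⟩
          right; left; exact hePmax j hjP
        · left; exact ⟨hia, le_antisymm h3 hj⟩
      · omega
      · right; right; omega
    -- left part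
    set Fl : Set (Set ℕ) := {B ∈ F | B ⊆ Set.Icc a e} with hFl
    have hFlmax : MaxFam a (a + (e - a)) Fl := by
      have hae : a + (e - a) = e := by omega
      rw [hae]
      refine ⟨?_, ?_, ⟨he3, le_refl _⟩, ?_⟩
      · rintro B ⟨hB, hBsub⟩
        obtain ⟨i, j, h1, h2, h3, rfl⟩ := hrange B hB
        have : j ∈ Set.Icc a e := hBsub ⟨by omega, le_refl _⟩
        exact ⟨i, j, h1, h2, this.2, rfl⟩
      · rintro B1 ⟨h1, _⟩ B2 ⟨h2, _⟩; exact hcompat _ h1 _ h2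
      · intro i j h1 h2 h3 hcpt
        have hmem : Set.Icc i j ∈ F := by
          apply hmax i j h1 h2 (by omega)
          intro C hC
          obtain ⟨i', j', g1, g2, g3, rfl⟩ := hrange C hC
          rcases K1 i' j' g1 g2 g3 hC with ⟨f1, f2⟩ | f | f
          · rw [compat_icc_iff h2 g2]; omega
          · exact hcpt _ ⟨hC, Set.Icc_subset_Icc g1 f⟩
          · rw [compat_icc_iff h2 g2]; omega
        exact ⟨hmem, Set.Icc_subset_Icc h1 h3⟩
    obtain ⟨tl, htl1, htl2⟩ := ih (e - a) (by omega) a Fl hFlmax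
    rcases Nat.lt_or_ge (e + 1) (a + k) with hcase | hcase
    · -- right part nonempty : e + 2 ≤ a + k
      have K2 : Set.Icc (e + 2) (a + k) ∈ F := by
        apply hmax (e + 2) (a + k) (by omega) (by omega) (le_refl _)
        intro C hC
        obtain ⟨i', j', g1, g2, g3, rfl⟩ := hrange C hC
        rw [compat_icc_iff (by omega) g2]
        rcases K1 i' j' g1 g2 g3 hC with ⟨f1, f2⟩ | f | f <;> omega
      set Fr : Set (Set ℕ) := {B ∈ F | B ⊆ Set.Icc (e + 2) (a + k)} with hFr
      have hFrmax : MaxFam (e + 2) ((e + 2) + (a + k - e - 2)) Fr := by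
        have hae : (e + 2) + (a + k - e - 2) = a + k := by omega
        rw [hae]
        refine ⟨?_, ?_, ⟨K2, le_refl _⟩, ?_⟩
        · rintro B ⟨hB, hBsub⟩
          obtain ⟨i, j, h1, h2, h3, rfl⟩ := hrange B hB
          have : i ∈ Set.Icc (e + 2) (a + k) := hBsub ⟨le_refl _, by omega⟩
          exact ⟨i, j, this.1, h2, h3, rfl⟩
        · rintro B1 ⟨h1, _⟩ B2 ⟨h2, _⟩; exact hcompat _ h1 _ h2
        · intro i j h1 h2 h3 hcpt
          have hmem : Set.Icc i j ∈ F := by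
            apply hmax i j (by omega) h2 h3
            intro C hC
            obtain ⟨i', j', g1, g2, g3, rfl⟩ := hrange C hC
            rcases K1 i' j' g1 g2 g3 hC with ⟨f1, f2⟩ | f | f
            · rw [compat_icc_iff h2 g2]; omega
            · rw [compat_icc_iff h2 g2]; omega
            · exact hcpt _ ⟨hC, Set.Icc_subset_Icc f g3⟩
          exact ⟨hmem, Set.Icc_subset_Icc h1 h3⟩
      obtain ⟨tr, htr1, htr2⟩ := ih (a + k - e - 2) (by omega) (e + 2) Fr hFrmax
      refine ⟨BinaryTree.node () tl tr, ?_, ?_⟩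
      · simp [BinaryTree.numNodes, htl1, htr1]; omega
      · show insert (Set.Icc a (a + tl.numNodes + tr.numNodes))
            (fam tl a ∪ fam tr (a + tl.numNodes + 1)) = F
        have e1 : a + tl.numNodes + tr.numNodes = a + k := by omega
        have e2 : a + tl.numNodes + 1 = e + 2 := by omega
        rw [e1, e2, htl2, htr2]
        apply Set.eq_of_subset_of_subset
        · rintro B (rfl | ⟨hB, _⟩ | ⟨hB, _⟩) <;> [exact htop; exact hB; exact hB]
        · intro B hB
          obtain ⟨i, j, h1, h2, h3, rfl⟩ := hrange B hB
          rcases K1 i j h1 h2 h3 hB with ⟨f1, f2⟩ | f | f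
          · subst f1; subst f2; exact Set.mem_insert _ _
          · exact Set.mem_insert_of_mem _ (Or.inl ⟨hB, Set.Icc_subset_Icc h1 f⟩)
          · exact Set.mem_insert_of_mem _ (Or.inr ⟨hB, Set.Icc_subset_Icc f h3⟩)
    · -- e + 1 = a + k : no right part
      have hek : e + 1 = a + k := by omega
      refine ⟨BinaryTree.node () tl BinaryTree.nil, ?_, ?_⟩
      · simp [BinaryTree.numNodes, htl1]; omega
      · show insert (Set.Icc a (a + tl.numNodes + BinaryTree.numNodes (BinaryTree.nil : BinaryTree Unit)))
            (fam tl a ∪ fam (BinaryTree.nil : BinaryTree Unit) (a + tl.numNodes + 1)) = F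
        have e1 : a + tl.numNodes + BinaryTree.numNodes (BinaryTree.nil : BinaryTree Unit) = a + k := by
          simp [BinaryTree.numNodes]; omega
        rw [e1, htl2]
        apply Set.eq_of_subset_of_subset
        · rintro B (rfl | ⟨hB, _⟩ | hB)
          · exact htop
          · exact hB
          · exact absurd hB (Set.notMem_empty _)
        · intro B hB
          obtain ⟨i, j, h1, h2, h3, rfl⟩ := hrange B hB
          rcases K1 i j h1 h2 h3 hB with ⟨f1, f2⟩ | f | f
          · subst f1; subst f2; exact Set.mem_insert _ _
          · exact Set.mem_insert_of_mem _ (Or.inl ⟨hB, Set.Icc_subset_Icc h1 f⟩)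
          · omega
  · -- Case 2: no proper element contains a
    have hnoa : ∀ i j, a ≤ i → i ≤ j → j ≤ a + k → Set.Icc i j ∈ F → i = a →
        j = a + k := by
      intro i j h1 h2 h3 hB hia
      by_contra hne
      exact hPne ⟨j, by omega, by omega, by rw [← hia]; exact hB⟩
    have hsub1 : Set.Icc (a + 1) (a + k) ∈ F := by
      apply hmax (a + 1) (a + k) (by omega) (by omega) (le_refl _)
      intro C hC
      obtain ⟨i', j', g1, g2, g3, rfl⟩ := hrange C hC
      rw [compat_icc_iff (by omega) g2]
      rcases Nat.eq_or_lt_of_le g1 with hia | hia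
      · have := hnoa i' j' g1 g2 g3 hC hia.symm; omega
      · omega
    set Fr : Set (Set ℕ) := {B ∈ F | B ⊆ Set.Icc (a + 1) (a + k)} with hFr
    have hFrmax : MaxFam (a + 1) ((a + 1) + (k - 1)) Fr := by
      have hae : (a + 1) + (k - 1) = a + k := by omega
      rw [hae]
      refine ⟨?_, ?_, ⟨hsub1, le_refl _⟩, ?_⟩
      · rintro B ⟨hB, hBsub⟩
        obtain ⟨i, j, h1, h2, h3, rfl⟩ := hrange B hB
        have : i ∈ Set.Icc (a + 1) (a + k) := hBsub ⟨le_refl _, by omega⟩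
        exact ⟨i, j, this.1, h2, h3, rfl⟩
      · rintro B1 ⟨h1, _⟩ B2 ⟨h2, _⟩; exact hcompat _ h1 _ h2
      · intro i j h1 h2 h3 hcpt
        have hmem : Set.Icc i j ∈ F := by
          apply hmax i j (by omega) h2 h3
          intro C hC
          obtain ⟨i', j', g1, g2, g3, rfl⟩ := hrange C hC
          rcases Nat.eq_or_lt_of_le g1 with hia | hia
          · have := hnoa i' j' g1 g2 g3 hC hia.symm
            rw [compat_icc_iff h2 g2]; omega
          · exact hcpt _ ⟨hC, Set.Icc_subset_Icc (by omega) g3⟩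
        exact ⟨hmem, Set.Icc_subset_Icc h1 h3⟩
    obtain ⟨tr, htr1, htr2⟩ := ih (k - 1) (by omega) (a + 1) Fr hFrmax
    refine ⟨BinaryTree.node () BinaryTree.nil tr, ?_, ?_⟩
    · simp [BinaryTree.numNodes, htr1]; omega
    · show insert (Set.Icc a (a + BinaryTree.numNodes (BinaryTree.nil : BinaryTree Unit) + tr.numNodes))
          (fam (BinaryTree.nil : BinaryTree Unit) a ∪ fam tr (a + BinaryTree.numNodes (BinaryTree.nil : BinaryTree Unit) + 1)) = F
      have e1 : a + BinaryTree.numNodes (BinaryTree.nil : BinaryTree Unit) + tr.numNodes = a + k := by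
        simp [BinaryTree.numNodes]; omega
      have e2 : a + BinaryTree.numNodes (BinaryTree.nil : BinaryTree Unit) + 1 = a + 1 := by simp [BinaryTree.numNodes]
      rw [e1, e2, htr2]
      apply Set.eq_of_subset_of_subset
      · rintro B (rfl | hB | ⟨hB, _⟩)
        · exact htop
        · exact absurd hB (Set.notMem_empty _)
        · exact hB
      · intro B hB
        obtain ⟨i, j, h1, h2, h3, rfl⟩ := hrange B hB
        rcases Nat.eq_or_lt_of_le h1 with hia | hia
        · have := hnoa i j h1 h2 h3 hB hia.symm
          rw [← hia, this]
          exact Set.mem_insert _ _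
        · exact Set.mem_insert_of_mem _ (Or.inr ⟨hB, Set.Icc_subset_Icc (by omega) h3⟩)

lemma compat_empty_right (B : Set ℕ) : pathGraph.Compatible B ∅ :=
  Or.inr (Or.inl (Set.empty_subset B))

lemma compat_empty_left (B : Set ℕ) : pathGraph.Compatible ∅ B :=
  Or.inl (Set.empty_subset B)

/-- A nonempty connected member of a nested set is an interval. -/
lemma nested_elem_icc {n : ℕ} {B : Set ℕ} (hsub : B ⊆ Set.Icc 1 (n - 1))
    (hne : B.Nonempty) (hc : (pathGraph.induce B).Connected) :
    ∃ i j, 1 ≤ i ∧ i ≤ j ∧ j ≤ n - 1 ∧ B = Set.Icc i j := by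
  have hbdd : BddAbove B := ⟨n - 1, fun x hx => (hsub hx).2⟩
  have hiB : sInf B ∈ B := Nat.sInf_mem hne
  have hjB : sSup B ∈ B := Nat.sSup_mem hne hbdd
  refine ⟨sInf B, sSup B, (hsub hiB).1, le_csSup hbdd hiB, (hsub hjB).2, ?_⟩
  apply Set.eq_of_subset_of_subset
  · intro x hx
    exact ⟨Nat.sInf_le hx, le_csSup hbdd hx⟩
  · intro x hx
    exact connected_subset_interval hc hiB hjB hx.1 hx.2

lemma maxnested_to_maxfam {n : ℕ} {H : Set (Set ℕ)} (hn : 2 ≤ n)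
    (hH : IsMaxNestedSetA n H) : MaxFam 1 (n - 1) (H \ {(∅ : Set ℕ)}) := by
  obtain ⟨⟨hsub, hconn, hcompat, hemp, hfull⟩, hmx⟩ := hH
  have hne : ∀ B ∈ H \ {(∅ : Set ℕ)}, B.Nonempty := by
    rintro B ⟨hB, hB2⟩
    rw [Set.nonempty_iff_ne_empty]
    simpa using hB2
  refine ⟨?_, ?_, ?_, ?_⟩
  · rintro B hB
    exact nested_elem_icc (hsub B hB.1) (hne B hB) (hconn B hB.1 (hne B hB))
  · rintro B1 ⟨h1, _⟩ B2 ⟨h2, _⟩; exact hcompat _ h1 _ h2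
  · refine ⟨hfull, ?_⟩
    simp only [Set.mem_singleton_iff]
    intro h
    have : (1 : ℕ) ∈ Set.Icc 1 (n - 1) := ⟨le_refl _, by omega⟩
    rw [h] at this
    exact Set.notMem_empty _ this
  · intro i j h1 h2 h3 hcpt
    have hnested : IsNestedSetA n (insert (Set.Icc i j) H) := by
      refine ⟨?_, ?_, ?_, Set.mem_insert_of_mem _ hemp, Set.mem_insert_of_mem _ hfull⟩
      · rintro B (rfl | hB)
        · exact Set.Icc_subset_Icc h1 h3
        · exact hsub B hB
      · rintro B (rfl | hB)
        · intro _; exact icc_connected h2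
        · exact hconn B hB
      · have haux : ∀ B ∈ H, pathGraph.Compatible (Set.Icc i j) B := by
          intro B hB
          by_cases hBe : B = ∅
          · subst hBe; exact compat_empty_right _
          · exact hcpt B ⟨hB, by simpa using hBe⟩
        rintro B1 (rfl | h1') B2 (rfl | h2')
        · exact Or.inl (le_refl _)
        · exact haux _ h2'
        · have := haux _ h1'
          rcases this with h | h | h
          · exact Or.inr (Or.inl h)
          · exact Or.inl h
          · exact Or.inr (Or.inr ⟨h.1.symm, fun p hp q hq hadj => h.2 q hq p hp hadj.symm⟩)
        · exact hcompat _ h1' _ h2'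
    have := hmx _ hnested (Set.subset_insert _ _)
    have hmem : Set.Icc i j ∈ H := this ▸ Set.mem_insert _ _
    refine ⟨hmem, ?_⟩
    simp only [Set.mem_singleton_iff]
    intro h
    have : i ∈ Set.Icc i j := ⟨le_refl _, h2⟩
    rw [h] at this
    exact Set.notMem_empty _ this

lemma fam_to_maxnested {n : ℕ} (hn : 2 ≤ n) (t : BinaryTree Unit) (ht : t.numNodes = n - 1) :
    IsMaxNestedSetA n (insert (∅ : Set ℕ) (fam t 1)) := by
  have hfull : Set.Icc 1 (n - 1) ∈ fam t 1 := by
    apply fam_max t 1 1 (n - 1) (le_refl _) (by omega) (by omega)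
    intro C hC
    obtain ⟨i, j, h1, h2, h3, rfl⟩ := fam_range t 1 C hC
    rw [compat_icc_iff (by omega) h2]
    omega
  have hsub : ∀ B ∈ fam t 1, B ⊆ Set.Icc 1 (n - 1) := by
    intro B hB
    obtain ⟨i, j, h1, h2, h3, rfl⟩ := fam_range t 1 B hB
    exact Set.Icc_subset_Icc h1 (by omega)
  constructor
  · refine ⟨?_, ?_, ?_, Set.mem_insert _ _, Set.mem_insert_of_mem _ hfull⟩
    · rintro B (rfl | hB)
      · exact Set.empty_subset _
      · exact hsub B hB
    · rintro B (rfl | hB)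
      · intro h; exact absurd h (by simp)
      · intro _
        obtain ⟨i, j, h1, h2, h3, rfl⟩ := fam_range t 1 B hB
        exact icc_connected h2
    · rintro B1 (rfl | h1') B2 (rfl | h2')
      · exact compat_empty_left _
      · exact compat_empty_left _
      · exact compat_empty_right _
      · exact fam_compat t 1 _ h1' _ h2'
  · intro H' hH' hsub'
    apply Set.eq_of_subset_of_subset
    · intro B hB
      by_cases hBe : B = ∅
      · subst hBe; exact Set.mem_insert _ _
      · have hBne : B.Nonempty := Set.nonempty_iff_ne_empty.mpr hBe
        obtain ⟨i, j, h1, h2, h3, rfl⟩ :=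
          nested_elem_icc (hH'.1 B hB) hBne (hH'.2.1 B hB hBne)
        refine Set.mem_insert_of_mem _ ?_
        apply fam_max t 1 i j h1 h2 (by omega)
        intro C hC
        exact hH'.2.2.1 _ hB _ (hsub' (Set.mem_insert_of_mem _ hC))
    · exact hsub'

lemma empty_not_mem_fam (t : BinaryTree Unit) (a : ℕ) : (∅ : Set ℕ) ∉ fam t a := by
  intro h
  obtain ⟨x, hx⟩ := fam_nonempty_mem t a ∅ h
  exact Set.notMem_empty _ hx

lemma maxnested_eq_fam {n : ℕ} (hn : 2 ≤ n) {H : Set (Set ℕ)}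
    (hH : IsMaxNestedSetA n H) :
    ∃ t : BinaryTree Unit, t.numNodes = n - 1 ∧ fam t 1 = H \ {(∅ : Set ℕ)} := by
  have hmf := maxnested_to_maxfam hn hH
  have h1 : (1 : ℕ) + (n - 2) = n - 1 := by omega
  rw [← h1] at hmf
  obtain ⟨t, ht1, ht2⟩ := maxfam_exists (n - 2) 1 _ hmf
  exact ⟨t, by omega, ht2⟩

/-- Maximal nested sets on the diagram `A_{n-1}` are in bijection with complete
bracketings of the monomial `x_1 ⋯ x_n` (equivalently, planar binary trees with
`n` leaves, i.e. with `n-1` internal nodes); in particular every maximal nested set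
on `A_{n-1}` has exactly `n-1` elements besides the empty diagram. -/
theorem maxNestedSetsA_equiv_bracketings (n : ℕ) (hn : 2 ≤ n) :
    Nonempty ({H : Set (Set ℕ) // IsMaxNestedSetA n H} ≃
      {t : Tree Unit // t.numNodes = n - 1}) ∧
    (∀ H : Set (Set ℕ), IsMaxNestedSetA n H → (H \ {(∅ : Set ℕ)}).ncard = n - 1) := by
  constructor
  · refine ⟨(Equiv.ofBijective
      (fun t : {t : Tree Unit // t.numNodes = n - 1} =>
        (⟨insert (∅ : Set ℕ) (fam t.1 1), fam_to_maxnested hn t.1 t.2⟩ :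
          {H : Set (Set ℕ) // IsMaxNestedSetA n H})) ⟨?_, ?_⟩).symm⟩
    · intro t t' h
      have h' : insert (∅ : Set ℕ) (fam t.1 1) = insert (∅ : Set ℕ) (fam t'.1 1) :=
        congrArg Subtype.val h
      have e1 : fam t.1 1 = fam t'.1 1 := by
        have k1 := Set.insert_diff_self_of_notMem (empty_not_mem_fam t.1 1)
        have k2 := Set.insert_diff_self_of_notMem (empty_not_mem_fam t'.1 1)
        rw [← k1, ← k2, h']
      exact Subtype.ext (fam_inj _ _ _ e1)
    · rintro ⟨H, hH⟩
      obtain ⟨t, ht1, ht2⟩ := maxnested_eq_fam hn hH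
      refine ⟨⟨t, ht1⟩, Subtype.ext ?_⟩
      show insert (∅ : Set ℕ) (fam t 1) = H
      rw [ht2, Set.insert_diff_singleton, Set.insert_eq_self.mpr hH.1.2.2.2.1]
  · intro H hH
    obtain ⟨t, ht1, ht2⟩ := maxnested_eq_fam hn hH
    rw [← ht2, fam_ncard, ht1]
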